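/- Let ℓ and ℓ' be nonnegative integers. Then the (ℓ+ℓ'+1)-tuple ( 1/(ℓ+1), 2/(ℓ+1), ..., ℓ/(ℓ+1), 1/(ℓ'+1), 2/(ℓ'+1), ..., ℓ'/(ℓ'+1), 1/2 ) belongs to (1/(ℓ+ℓ'+2)) · 𝒜_{ℓ+ℓ'+1}; equivalently, (ℓ+ℓ'+2) times this tuple lies in the convex hull of the permutations of (1, 2, ..., ℓ+ℓ'+1). -/

import Mathlib

def permsHull (r : ℕ) : Set (Fin r → ℝ) :=
  convexHull ℝ {v : Fin r → ℝ | ∃ σ : Equiv.Perm (Fin r), v = fun i => ((σ i : ℕ) : ℝ) + 1}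

namespace Stmt14

lemma gen_mem (r : ℕ) (σ : Equiv.Perm (Fin r)) :
    (fun i => ((σ i : ℕ) : ℝ) + 1) ∈ permsHull r :=
  subset_convexHull ℝ _ ⟨σ, rfl⟩

/-- the cycle sending `p ↦ r` and `i ↦ i-1` for `p < i ≤ r`, identity below `p`. -/
def insPerm (r p : ℕ) (hp : p ≤ r) : Equiv.Perm (Fin (r+1)) where
  toFun i := if (i:ℕ) < p then i else if (i:ℕ) = p then Fin.last r
    else ⟨(i:ℕ)-1, by have := i.isLt; omega⟩
  invFun j := if (j:ℕ) < p then j else if h2 : (j:ℕ) = r then ⟨p, by omega⟩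
    else ⟨(j:ℕ)+1, by have := j.isLt; omega⟩
  left_inv := by
    rintro ⟨m, hm⟩
    dsimp only
    by_cases h1 : m < p
    · rw [if_pos h1, if_pos h1]
    · by_cases h2 : m = p
      · rw [if_neg h1, if_pos h2, if_neg (show ¬((Fin.last r : ℕ) < p) by simp; omega),
          dif_pos (by simp)]
        apply Fin.ext; simp; omega
      · rw [if_neg h1, if_neg h2, if_neg (show ¬((⟨m-1, by omega⟩ : Fin (r+1)) : ℕ) < p by
          simp; omega), dif_neg (show ¬(((⟨m-1, by omega⟩ : Fin (r+1)) : ℕ) = r) by simp; omega)]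
        apply Fin.ext; simp; omega
  right_inv := by
    rintro ⟨m, hm⟩
    dsimp only
    by_cases h1 : m < p
    · rw [if_pos h1, if_pos h1]
    · by_cases h2 : m = r
      · rw [if_neg h1, dif_pos h2, if_neg (show ¬(((⟨p, by omega⟩ : Fin (r+1)) : ℕ) < p) by simp),
          if_pos (by simp [hp, Nat.lt_succ_iff])]
        apply Fin.ext; simp [Fin.last]; omega
      · rw [if_neg h1, dif_neg h2, if_neg (show ¬(((⟨m+1, by omega⟩ : Fin (r+1)) : ℕ) < p) by
          simp; omega), if_neg (show ¬(((⟨m+1, by omega⟩ : Fin (r+1)) : ℕ) = p) by simp; omega)]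
        apply Fin.ext; simp

/-- extend a permutation of `Fin r` to `Fin (r+1)` fixing the last element. -/
def extPerm (r : ℕ) (σ : Equiv.Perm (Fin r)) : Equiv.Perm (Fin (r+1)) where
  toFun i := if h : (i:ℕ) < r then Fin.castSucc (σ ⟨i, h⟩) else Fin.last r
  invFun i := if h : (i:ℕ) < r then Fin.castSucc (σ.symm ⟨i, h⟩) else Fin.last r
  left_inv := by
    rintro ⟨m, hm⟩
    dsimp only
    by_cases h : m < r
    · rw [dif_pos h, dif_pos (show ((Fin.castSucc (σ ⟨m, h⟩)) : ℕ) < r by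
        simp [Fin.coe_castSucc])]
      apply Fin.ext
      simp
    · rw [dif_neg h, dif_neg (show ¬((Fin.last r : ℕ) < r) by simp)]
      apply Fin.ext; simp; omega
  right_inv := by
    rintro ⟨m, hm⟩
    dsimp only
    by_cases h : m < r
    · rw [dif_pos h, dif_pos (show ((Fin.castSucc (σ.symm ⟨m, h⟩)) : ℕ) < r by
        simp [Fin.coe_castSucc])]
      apply Fin.ext
      simp
    · rw [dif_neg h, dif_neg (show ¬((Fin.last r : ℕ) < r) by simp)]
      apply Fin.ext; simp; omega

lemma snoc_mk_lt {n : ℕ} (x : Fin n → ℝ) (c : ℝ) (m : ℕ) (h : m < n) (h' : m < n+1) :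
    Fin.snoc (α := fun _ => ℝ) x c ⟨m, h'⟩ = x ⟨m, h⟩ := by
  have e : (⟨m, h'⟩ : Fin (n+1)) = Fin.castSucc ⟨m, h⟩ := by apply Fin.ext; simp
  rw [e, Fin.snoc_castSucc]

lemma snoc_mk_last {n : ℕ} (x : Fin n → ℝ) (c : ℝ) (h' : n < n+1) :
    Fin.snoc (α := fun _ => ℝ) x c ⟨n, h'⟩ = c := by
  have e : (⟨n, h'⟩ : Fin (n+1)) = Fin.last n := rfl
  rw [e, Fin.snoc_last]

/-- the affine map `x ↦ Fin.snoc x c`. -/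
noncomputable def snocA (r : ℕ) (c : ℝ) : (Fin r → ℝ) →ᵃ[ℝ] (Fin (r+1) → ℝ) where
  toFun x := Fin.snoc x c
  linear :=
    { toFun := fun x => Fin.snoc x 0
      map_add' := by
        intro x y; funext j
        cases j using Fin.lastCases <;> simp
      map_smul' := by
        intro c x; funext j
        cases j using Fin.lastCases <;> simp }
  map_vadd' := by
    intro p v; funext j
    cases j using Fin.lastCases <;> simp

/-- insert the value `r+1` at position `p`, shifting the rest. -/
def insF (r p : ℕ) (hp : p ≤ r) (x : Fin r → ℝ) : Fin (r+1) → ℝ :=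
  fun i => if h1 : (i:ℕ) < p then x ⟨i, by omega⟩
    else if h2 : (i:ℕ) = p then ((r:ℝ)+1)
    else x ⟨(i:ℕ)-1, by have := i.isLt; omega⟩

lemma insF_eq (r p : ℕ) (hp : p ≤ r) (x : Fin r → ℝ) :
    insF r p hp x = (Fin.snoc x ((r:ℝ)+1)) ∘ (insPerm r p hp) := by
  funext i
  rcases i with ⟨m, hm⟩
  simp only [insF, insPerm, Function.comp_apply, Equiv.coe_fn_mk]
  by_cases h1 : m < p
  · rw [dif_pos h1, if_pos h1, snoc_mk_lt (h := by omega)]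
  · by_cases h2 : m = p
    · rw [dif_neg h1, dif_pos h2, if_neg h1, if_pos h2]
      have : (Fin.last r : Fin (r+1)) = ⟨r, by omega⟩ := rfl
      rw [this, snoc_mk_last]
    · rw [dif_neg h1, dif_neg h2, if_neg h1, if_neg h2, snoc_mk_lt (h := by omega)]

lemma snoc_gen (r : ℕ) (σ : Equiv.Perm (Fin r)) :
    Fin.snoc (fun i => ((σ i : ℕ) : ℝ) + 1) ((r:ℝ)+1)
      = fun j => ((extPerm r σ j : ℕ) : ℝ) + 1 := by
  funext j
  cases j using Fin.lastCases with
  | last =>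
    simp only [Fin.snoc_last, extPerm, Equiv.coe_fn_mk]
    rw [dif_neg (by simp)]
    simp
  | cast i =>
    simp only [Fin.snoc_castSucc, extPerm, Equiv.coe_fn_mk]
    rw [dif_pos (by simp [Fin.coe_castSucc, Fin.isLt] : ((Fin.castSucc i : Fin (r+1)) : ℕ) < r)]
    simp

lemma insF_mem (r p : ℕ) (hp : p ≤ r) (x : Fin r → ℝ) (hx : x ∈ permsHull r) :
    insF r p hp x ∈ permsHull (r+1) := by
  rw [insF_eq]
  set Φ : (Fin r → ℝ) →ᵃ[ℝ] (Fin (r+1) → ℝ) :=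
    ((LinearMap.funLeft ℝ ℝ ⇑(insPerm r p hp)).toAffineMap).comp (snocA r ((r:ℝ)+1)) with hΦ
  have hval : ∀ y : Fin r → ℝ, Φ y = (Fin.snoc y ((r:ℝ)+1)) ∘ (insPerm r p hp) := by
    intro y; rfl
  have himg : Φ x ∈ Φ '' (convexHull ℝ
      {v : Fin r → ℝ | ∃ σ : Equiv.Perm (Fin r), v = fun i => ((σ i : ℕ) : ℝ) + 1}) :=
    Set.mem_image_of_mem _ hx
  rw [AffineMap.image_convexHull] at himg
  rw [← hval]
  refine convexHull_mono ?_ himg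
  rintro _ ⟨v, ⟨σ, rfl⟩, rfl⟩
  refine ⟨(insPerm r p hp).trans (extPerm r σ), ?_⟩
  rw [hval]
  funext j
  simp only [Function.comp_apply, Equiv.trans_apply]
  rw [snoc_gen]

/-- the three-block vector: blocks of sizes `a`, `b`, `c` (with `a+b+c = n`),
block entries `(k+1)*(n+1)/(size+1)`. -/
noncomputable def wv (n a b c : ℕ) : Fin n → ℝ :=
  fun i => ((n:ℝ) + 1) *
    (if (i:ℕ) < a then (((i:ℕ):ℝ) + 1) / ((a:ℝ) + 1)
     else if (i:ℕ) < a + b then (((i:ℕ) - a + 1 : ℕ) : ℝ) / ((b:ℝ) + 1)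
     else (((i:ℕ) - a - b + 1 : ℕ) : ℝ) / ((c:ℝ) + 1))

lemma wv_lo' (n a b c m : ℕ) (hm : m < n) (h : m < a) :
    wv n a b c ⟨m, hm⟩ = ((n:ℝ)+1) * (((m:ℝ)+1)/((a:ℝ)+1)) := by
  simp only [wv, Fin.val_mk]
  rw [if_pos h]

lemma wv_mid' (n a b c m : ℕ) (hm : m < n) (h1 : a ≤ m) (h2 : m < a + b) :
    wv n a b c ⟨m, hm⟩ = ((n:ℝ)+1) * (((m:ℝ) - (a:ℝ) + 1)/((b:ℝ)+1)) := by
  simp only [wv, Fin.val_mk]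
  rw [if_neg (by omega), if_pos h2]
  push_cast [Nat.cast_sub h1]
  ring

lemma wv_hi' (n a b c m : ℕ) (hm : m < n) (h : a + b ≤ m) :
    wv n a b c ⟨m, hm⟩ = ((n:ℝ)+1) * (((m:ℝ) - (a:ℝ) - (b:ℝ) + 1)/((c:ℝ)+1)) := by
  simp only [wv, Fin.val_mk]
  rw [if_neg (by omega), if_neg (by omega)]
  push_cast [Nat.cast_sub (show b ≤ m - a by omega), Nat.cast_sub (show a ≤ m by omega)]
  ring

lemma iw_at' (r p : ℕ) (hp : p ≤ r) (x : Fin r → ℝ) (m : ℕ) (hm : m < r+1) (h : m = p) :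
    insF r p hp x ⟨m, hm⟩ = (r:ℝ)+1 := by
  simp only [insF, Fin.val_mk]
  rw [dif_neg (by omega), dif_pos h]

lemma iw_lo_lo (r p : ℕ) (hp : p ≤ r) (a b c m : ℕ) (hm : m < r+1) (h1 : m < p) (h2 : m < a) :
    insF r p hp (wv r a b c) ⟨m, hm⟩ = ((r:ℝ)+1) * (((m:ℝ)+1)/((a:ℝ)+1)) := by
  simp only [insF, Fin.val_mk]
  rw [dif_pos h1]
  exact wv_lo' r a b c m (by omega) h2

lemma iw_lo_mid (r p : ℕ) (hp : p ≤ r) (a b c m : ℕ) (hm : m < r+1) (h1 : m < p)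
    (h2 : a ≤ m) (h3 : m < a + b) :
    insF r p hp (wv r a b c) ⟨m, hm⟩ = ((r:ℝ)+1) * (((m:ℝ) - (a:ℝ) + 1)/((b:ℝ)+1)) := by
  simp only [insF, Fin.val_mk]
  rw [dif_pos h1]
  exact wv_mid' r a b c m (by omega) h2 h3

lemma iw_lo_hi (r p : ℕ) (hp : p ≤ r) (a b c m : ℕ) (hm : m < r+1) (h1 : m < p)
    (h2 : a + b ≤ m) :
    insF r p hp (wv r a b c) ⟨m, hm⟩ = ((r:ℝ)+1) * (((m:ℝ) - (a:ℝ) - (b:ℝ) + 1)/((c:ℝ)+1)) := by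
  simp only [insF, Fin.val_mk]
  rw [dif_pos h1]
  exact wv_hi' r a b c m (by omega) h2

lemma iw_hi_lo (r p : ℕ) (hp : p ≤ r) (a b c m : ℕ) (hm : m < r+1) (h1 : p < m)
    (h2 : m - 1 < a) :
    insF r p hp (wv r a b c) ⟨m, hm⟩ = ((r:ℝ)+1) * (((m:ℝ))/((a:ℝ)+1)) := by
  simp only [insF, Fin.val_mk]
  rw [dif_neg (by omega), dif_neg (by omega)]
  rw [wv_lo' r a b c (m-1) (by omega) h2]
  push_cast [Nat.cast_sub (show 1 ≤ m by omega)]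
  ring

lemma iw_hi_mid (r p : ℕ) (hp : p ≤ r) (a b c m : ℕ) (hm : m < r+1) (h1 : p < m)
    (h2 : a + 1 ≤ m) (h3 : m < a + b + 1) :
    insF r p hp (wv r a b c) ⟨m, hm⟩ = ((r:ℝ)+1) * (((m:ℝ) - (a:ℝ))/((b:ℝ)+1)) := by
  simp only [insF, Fin.val_mk]
  rw [dif_neg (by omega), dif_neg (by omega)]
  rw [wv_mid' r a b c (m-1) (by omega) (by omega) (by omega)]
  push_cast [Nat.cast_sub (show 1 ≤ m by omega)]
  ring

lemma iw_hi_hi (r p : ℕ) (hp : p ≤ r) (a b c m : ℕ) (hm : m < r+1) (h1 : p < m)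
    (h2 : a + b + 1 ≤ m) :
    insF r p hp (wv r a b c) ⟨m, hm⟩ = ((r:ℝ)+1) * (((m:ℝ) - (a:ℝ) - (b:ℝ))/((c:ℝ)+1)) := by
  simp only [insF, Fin.val_mk]
  rw [dif_neg (by omega), dif_neg (by omega)]
  rw [wv_hi' r a b c (m-1) (by omega) (by omega)]
  push_cast [Nat.cast_sub (show 1 ≤ m by omega)]
  ring

lemma mem2 {r : ℕ} {z1 z2 : Fin r → ℝ} (h1 : z1 ∈ permsHull r) (h2 : z2 ∈ permsHull r)
    {w1 w2 : ℝ} (p1 : 0 ≤ w1) (p2 : 0 ≤ w2) (hs : w1 + w2 = 1) :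
    w1 • z1 + w2 • z2 ∈ permsHull r :=
  (convex_convexHull ℝ _) h1 h2 p1 p2 hs

lemma mem3 {r : ℕ} {z1 z2 z3 : Fin r → ℝ} (h1 : z1 ∈ permsHull r) (h2 : z2 ∈ permsHull r)
    (h3 : z3 ∈ permsHull r) {w1 w2 w3 : ℝ} (p1 : 0 < w1) (p2 : 0 < w2) (p3 : 0 < w3)
    (hs : w1 + w2 + w3 = 1) : w1 • z1 + w2 • z2 + w3 • z3 ∈ permsHull r := by
  have h23 : 0 < w2 + w3 := by linarith
  have hne : w2 + w3 ≠ 0 := ne_of_gt h23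
  have hq : (w2/(w2+w3)) • z2 + (w3/(w2+w3)) • z3 ∈ permsHull r :=
    mem2 h2 h3 (by positivity) (by positivity) (by rw [← add_div, div_self hne])
  have h' := mem2 h1 hq p1.le h23.le (by linarith)
  have e : w1 • z1 + (w2+w3) • ((w2/(w2+w3)) • z2 + (w3/(w2+w3)) • z3)
      = w1 • z1 + w2 • z2 + w3 • z3 := by
    rw [smul_add, smul_smul, smul_smul,
      show (w2+w3) * (w2/(w2+w3)) = w2 from by field_simp,
      show (w2+w3) * (w3/(w2+w3)) = w3 from by field_simp, add_assoc]
  rw [e] at h'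
  exact h'

lemma step1 (n : ℕ) : wv (n+1) (n+1) 0 0 ∈ permsHull (n+1) := by
  have e : wv (n+1) (n+1) 0 0 = (fun i => (((1 : Equiv.Perm (Fin (n+1))) i : ℕ) : ℝ) + 1) := by
    funext i
    rcases i with ⟨m, hm⟩
    rw [wv_lo' (n+1) (n+1) 0 0 m hm (by omega)]
    simp only [Equiv.Perm.coe_one, id_eq, Fin.val_mk]
    have hne : ((n:ℝ)+1+1) ≠ 0 := by positivity
    push_cast
    field_simp
  rw [e]
  exact gen_mem _ 1

set_option maxHeartbeats 1000000 in
lemma step2 (a b : ℕ)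
    (IH : ∀ a' b' c', a' + b' + c' = a + b + 1 →
      wv (a+b+1) a' b' c' ∈ permsHull (a+b+1)) :
    wv (a+b+1+1) (a+1) (b+1) 0 ∈ permsHull (a+b+1+1) := by
  have hz1 : insF (a+b+1) a (by omega) (wv (a+b+1) a (b+1) 0) ∈ permsHull (a+b+1+1) :=
    insF_mem _ _ _ _ (IH a (b+1) 0 (by omega))
  have hz2 : insF (a+b+1) (a+b+1) (by omega) (wv (a+b+1) (a+1) b 0) ∈ permsHull (a+b+1+1) :=
    insF_mem _ _ _ _ (IH (a+1) b 0 (by omega))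
  have key : wv (a+b+1+1) (a+1) (b+1) 0
      = (((a:ℝ)+1)/((a:ℝ)+(b:ℝ)+2)) • insF (a+b+1) a (by omega) (wv (a+b+1) a (b+1) 0)
      + (((b:ℝ)+1)/((a:ℝ)+(b:ℝ)+2)) • insF (a+b+1) (a+b+1) (by omega) (wv (a+b+1) (a+1) b 0) := by
    funext i
    rcases i with ⟨m, hm⟩
    simp only [Pi.add_apply, Pi.smul_apply, smul_eq_mul]
    have hd1 : ((a:ℝ)+2) ≠ 0 := by positivity
    have hd2 : ((b:ℝ)+2) ≠ 0 := by positivity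
    have hd4 : ((a:ℝ)+(b:ℝ)+2) ≠ 0 := by positivity
    rcases (by omega : m < a ∨ a = m ∨ (a + 1 ≤ m ∧ m < a+b+1) ∨ m = a+b+1) with
      h | h | ⟨h, h'⟩ | h
    · rw [wv_lo' (a+b+1+1) (a+1) (b+1) 0 m hm (by omega),
        iw_lo_lo (a+b+1) a (by omega) a (b+1) 0 m hm h h,
        iw_lo_lo (a+b+1) (a+b+1) (by omega) (a+1) b 0 m hm (by omega) (by omega)]
      push_cast
      field_simp
      ring
    · subst h
      rw [wv_lo' (a+b+1+1) (a+1) (b+1) 0 a hm (by omega),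
        iw_at' (a+b+1) a (by omega) _ a hm rfl,
        iw_lo_lo (a+b+1) (a+b+1) (by omega) (a+1) b 0 a hm (by omega) (by omega)]
      push_cast
      field_simp
      ring
    · rw [wv_mid' (a+b+1+1) (a+1) (b+1) 0 m hm (by omega) (by omega),
        iw_hi_mid (a+b+1) a (by omega) a (b+1) 0 m hm (by omega) (by omega) (by omega),
        iw_lo_mid (a+b+1) (a+b+1) (by omega) (a+1) b 0 m hm (by omega) (by omega) (by omega)]
      push_cast
      field_simp
      ring
    · subst h
      rw [wv_mid' (a+b+1+1) (a+1) (b+1) 0 (a+b+1) hm (by omega) (by omega),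
        iw_hi_mid (a+b+1) a (by omega) a (b+1) 0 (a+b+1) hm (by omega) (by omega) (by omega),
        iw_at' (a+b+1) (a+b+1) (by omega) _ (a+b+1) hm rfl]
      push_cast
      field_simp
      ring
  rw [key]
  exact mem2 hz1 hz2 (by positivity) (by positivity)
    (by rw [← add_div, div_eq_one_iff_eq (by positivity : ((a:ℝ)+(b:ℝ)+2) ≠ 0)]; ring)

set_option maxHeartbeats 1000000 in
lemma step3 (a b c : ℕ)
    (IH : ∀ a' b' c', a' + b' + c' = a + b + c + 2 →
      wv (a+b+c+2) a' b' c' ∈ permsHull (a+b+c+2)) :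
    wv (a+b+c+2+1) (a+1) (b+1) (c+1) ∈ permsHull (a+b+c+2+1) := by
  have hz1 : insF (a+b+c+2) a (by omega) (wv (a+b+c+2) a (b+1) (c+1))
      ∈ permsHull (a+b+c+2+1) :=
    insF_mem _ _ _ _ (IH a (b+1) (c+1) (by omega))
  have hz2 : insF (a+b+c+2) (a+b+1) (by omega) (wv (a+b+c+2) (a+1) b (c+1))
      ∈ permsHull (a+b+c+2+1) :=
    insF_mem _ _ _ _ (IH (a+1) b (c+1) (by omega))
  have hz3 : insF (a+b+c+2) (a+b+c+2) (by omega) (wv (a+b+c+2) (a+1) (b+1) c)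
      ∈ permsHull (a+b+c+2+1) :=
    insF_mem _ _ _ _ (IH (a+1) (b+1) c (by omega))
  have key : wv (a+b+c+2+1) (a+1) (b+1) (c+1)
      = (((a:ℝ)+1)/((a:ℝ)+(b:ℝ)+(c:ℝ)+3)) •
          insF (a+b+c+2) a (by omega) (wv (a+b+c+2) a (b+1) (c+1))
      + (((b:ℝ)+1)/((a:ℝ)+(b:ℝ)+(c:ℝ)+3)) •
          insF (a+b+c+2) (a+b+1) (by omega) (wv (a+b+c+2) (a+1) b (c+1))
      + (((c:ℝ)+1)/((a:ℝ)+(b:ℝ)+(c:ℝ)+3)) •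
          insF (a+b+c+2) (a+b+c+2) (by omega) (wv (a+b+c+2) (a+1) (b+1) c) := by
    funext i
    rcases i with ⟨m, hm⟩
    simp only [Pi.add_apply, Pi.smul_apply, smul_eq_mul]
    have hd1 : ((a:ℝ)+2) ≠ 0 := by positivity
    have hd2 : ((b:ℝ)+2) ≠ 0 := by positivity
    have hd3 : ((c:ℝ)+2) ≠ 0 := by positivity
    have hd4 : ((a:ℝ)+(b:ℝ)+(c:ℝ)+3) ≠ 0 := by positivity
    rcases (by omega : m < a ∨ a = m ∨ (a + 1 ≤ m ∧ m < a+b+1) ∨ m = a+b+1 ∨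
        (a+b+2 ≤ m ∧ m < a+b+c+2) ∨ m = a+b+c+2) with
      h | h | ⟨h, h'⟩ | h | ⟨h, h'⟩ | h
    · rw [wv_lo' (a+b+c+2+1) (a+1) (b+1) (c+1) m hm (by omega),
        iw_lo_lo (a+b+c+2) a (by omega) a (b+1) (c+1) m hm h h,
        iw_lo_lo (a+b+c+2) (a+b+1) (by omega) (a+1) b (c+1) m hm (by omega) (by omega),
        iw_lo_lo (a+b+c+2) (a+b+c+2) (by omega) (a+1) (b+1) c m hm (by omega) (by omega)]
      push_cast
      field_simp
      ring
    · subst h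
      rw [wv_lo' (a+b+c+2+1) (a+1) (b+1) (c+1) a hm (by omega),
        iw_at' (a+b+c+2) a (by omega) _ a hm rfl,
        iw_lo_lo (a+b+c+2) (a+b+1) (by omega) (a+1) b (c+1) a hm (by omega) (by omega),
        iw_lo_lo (a+b+c+2) (a+b+c+2) (by omega) (a+1) (b+1) c a hm (by omega) (by omega)]
      push_cast
      field_simp
      ring
    · rw [wv_mid' (a+b+c+2+1) (a+1) (b+1) (c+1) m hm (by omega) (by omega),
        iw_hi_mid (a+b+c+2) a (by omega) a (b+1) (c+1) m hm (by omega) (by omega) (by omega),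
        iw_lo_mid (a+b+c+2) (a+b+1) (by omega) (a+1) b (c+1) m hm (by omega) (by omega)
          (by omega),
        iw_lo_mid (a+b+c+2) (a+b+c+2) (by omega) (a+1) (b+1) c m hm (by omega) (by omega)
          (by omega)]
      push_cast
      field_simp
      ring
    · subst h
      rw [wv_mid' (a+b+c+2+1) (a+1) (b+1) (c+1) (a+b+1) hm (by omega) (by omega),
        iw_hi_mid (a+b+c+2) a (by omega) a (b+1) (c+1) (a+b+1) hm (by omega) (by omega)
          (by omega),
        iw_at' (a+b+c+2) (a+b+1) (by omega) _ (a+b+1) hm rfl,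
        iw_lo_mid (a+b+c+2) (a+b+c+2) (by omega) (a+1) (b+1) c (a+b+1) hm (by omega)
          (by omega) (by omega)]
      push_cast
      field_simp
      ring
    · rw [wv_hi' (a+b+c+2+1) (a+1) (b+1) (c+1) m hm (by omega),
        iw_hi_hi (a+b+c+2) a (by omega) a (b+1) (c+1) m hm (by omega) (by omega),
        iw_hi_hi (a+b+c+2) (a+b+1) (by omega) (a+1) b (c+1) m hm (by omega) (by omega),
        iw_lo_hi (a+b+c+2) (a+b+c+2) (by omega) (a+1) (b+1) c m hm (by omega) (by omega)]
      push_cast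
      field_simp
      ring
    · subst h
      rw [wv_hi' (a+b+c+2+1) (a+1) (b+1) (c+1) (a+b+c+2) hm (by omega),
        iw_hi_hi (a+b+c+2) a (by omega) a (b+1) (c+1) (a+b+c+2) hm (by omega) (by omega),
        iw_hi_hi (a+b+c+2) (a+b+1) (by omega) (a+1) b (c+1) (a+b+c+2) hm (by omega)
          (by omega),
        iw_at' (a+b+c+2) (a+b+c+2) (by omega) _ (a+b+c+2) hm rfl]
      push_cast
      field_simp
      ring
  rw [key]
  exact mem3 hz1 hz2 hz3 (by positivity) (by positivity) (by positivity)
    (by rw [← add_div, ← add_div,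
      div_eq_one_iff_eq (by positivity : ((a:ℝ)+(b:ℝ)+(c:ℝ)+3) ≠ 0)]; ring)

lemma wv_rot (n b c : ℕ) (h : n ≤ b + c) : wv n 0 b c = wv n b c 0 := by
  funext i
  rcases i with ⟨m, hm⟩
  by_cases h1 : m < b
  · rw [wv_lo' n b c 0 m hm h1, wv_mid' n 0 b c m hm (by omega) (by omega)]
    push_cast
    ring
  · rw [wv_mid' n b c 0 m hm (by omega) (by omega),
      wv_hi' n 0 b c m hm (by omega)]
    push_cast
    ring

lemma wv_mid0 (n a c : ℕ) (h : n ≤ a + c) : wv n a 0 c = wv n a c 0 := by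
  funext i
  rcases i with ⟨m, hm⟩
  by_cases h1 : m < a
  · rw [wv_lo' n a 0 c m hm h1, wv_lo' n a c 0 m hm h1]
  · rw [wv_hi' n a 0 c m hm (by omega), wv_mid' n a c 0 m hm (by omega) (by omega)]
    push_cast
    ring

theorem wv_mem : ∀ n a b c : ℕ, a + b + c = n → wv n a b c ∈ permsHull n := by
  intro n
  induction n with
  | zero =>
    intro a b c _
    have e : wv 0 a b c = (fun i => (((1 : Equiv.Perm (Fin 0)) i : ℕ) : ℝ) + 1) := by
      funext i
      exact i.elim0
    rw [e]
    exact gen_mem 0 1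
  | succ n IH =>
    intro a b c h
    rcases a with _ | a
    · rcases b with _ | b
      · rcases c with _ | c
        · omega
        · rw [wv_rot (n+1) 0 (c+1) (by omega), wv_rot (n+1) (c+1) 0 (by omega)]
          obtain rfl : c = n := by omega
          exact step1 c
      · rcases c with _ | c
        · rw [wv_rot (n+1) (b+1) 0 (by omega)]
          obtain rfl : b = n := by omega
          exact step1 b
        · rw [wv_rot (n+1) (b+1) (c+1) (by omega)]
          obtain rfl : n = b + c + 1 := by omega
          exact step2 b c IH
    · rcases b with _ | b
      · rcases c with _ | c
        · obtain rfl : a = n := by omega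
          exact step1 a
        · rw [wv_mid0 (n+1) (a+1) (c+1) (by omega)]
          obtain rfl : n = a + c + 1 := by omega
          exact step2 a c IH
      · rcases c with _ | c
        · obtain rfl : n = a + b + 1 := by omega
          exact step2 a b IH
        · obtain rfl : n = a + b + c + 2 := by omega
          exact step3 a b c IH

end Stmt14

theorem stmt_14 (l l' : ℕ) :
    (fun i : Fin (l + l' + 1) =>
        ((l : ℝ) + (l' : ℝ) + 2) *
          (if (i : ℕ) < l then ((i : ℕ) + 1 : ℝ) / ((l : ℝ) + 1)
           else if (i : ℕ) < l + l' then (((i : ℕ) - l + 1 : ℕ) : ℝ) / ((l' : ℝ) + 1)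
           else (1 : ℝ) / 2))
      ∈ permsHull (l + l' + 1) := by
  have h := Stmt14.wv_mem (l + l' + 1) l l' 1 (by omega)
  have e : Stmt14.wv (l + l' + 1) l l' 1
      = (fun i : Fin (l + l' + 1) =>
        ((l : ℝ) + (l' : ℝ) + 2) *
          (if (i : ℕ) < l then ((i : ℕ) + 1 : ℝ) / ((l : ℝ) + 1)
           else if (i : ℕ) < l + l' then (((i : ℕ) - l + 1 : ℕ) : ℝ) / ((l' : ℝ) + 1)
           else (1 : ℝ) / 2)) := by
    funext i
    rcases i with ⟨m, hm⟩
    by_cases h1 : m < l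
    · rw [Stmt14.wv_lo' (l+l'+1) l l' 1 m hm h1]
      simp only [Fin.val_mk, if_pos h1]
      push_cast
      ring
    · by_cases h2 : m < l + l'
      · rw [Stmt14.wv_mid' (l+l'+1) l l' 1 m hm (by omega) h2]
        simp only [Fin.val_mk, if_neg h1, if_pos h2]
        push_cast [Nat.cast_sub (show l ≤ m by omega)]
        ring
      · rw [Stmt14.wv_hi' (l+l'+1) l l' 1 m hm (by omega)]
        simp only [Fin.val_mk, if_neg h1, if_neg h2]
        have e1 : m = l + l' := by omega
        subst e1
        push_cast
        ring
  rw [e] at h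
  exact h
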